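/- (Theorem 6.) Let n ≥ 1 and let D⁰ = {z ∈ ℂⁿ : |z₁| + … + |z_n| < 1} be the unit hypercone. For every real r with r ≥ 0.446663/n there exists a power series Σ_α c_α z^α converging at every point of D⁰ with |Σ_α c_α z^α| < 1 on D⁰, such that Σ_α |c_α| · r^{|α|} · (α₁^{α₁}···α_n^{α_n}/|α|^{|α|}) ≥ 1 (convention 0⁰ = 1). In other words, the Bohr-type inequality Σ_α sup_{z ∈ r·D⁰}|c_α z^α| < 1 fails for such r, so B_n(D⁰) < 0.446663/n. -/

import Mathlib

open Finset

lemma fiberHasSum {n : ℕ} {M : Type*} [AddCommMonoid M] [TopologicalSpace M]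
    (f : (Fin n → ℕ) → M) (k : ℕ) :
    HasSum (fun p : {α : Fin n → ℕ // (∑ j, α j) = k} => f p.1)
      (∑ α ∈ Finset.piAntidiag Finset.univ k, f α) := by
  have h := (Finset.piAntidiag (Finset.univ : Finset (Fin n)) k).hasSum f
  let e : {α : Fin n → ℕ // (∑ j, α j) = k} ≃
      {α // α ∈ Finset.piAntidiag (Finset.univ : Finset (Fin n)) k} :=
    Equiv.subtypeEquivRight (by intro α; simp [Finset.mem_piAntidiag])
  exact (e.hasSum_iff).mpr h

lemma mobius_hasSum (a : ℝ) (ha0 : 0 < a) (ha1 : a < 1) (w : ℂ) (hw : ‖w‖ < 1) :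
    ∃ M : ℂ, (HasSum (fun k : ℕ =>
        ((if k = 0 then a else -(1-a^2)*a^(k-1) : ℝ) : ℂ) * w ^ k) M) ∧ ‖M‖ < 1 := by
  have haC : (a : ℂ) ≠ 0 := by exact_mod_cast ha0.ne'
  have haw : ‖(a : ℂ) * w‖ < 1 := by
    rw [norm_mul, Complex.norm_real, Real.norm_eq_abs, abs_of_pos ha0]
    nlinarith [norm_nonneg w]
  have hne : (1 : ℂ) - (a : ℂ) * w ≠ 0 := by
    intro h
    have : (a : ℂ) * w = 1 := by linear_combination -h
    rw [this, norm_one] at haw; exact lt_irrefl _ haw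
  set C : ℂ := -(1 - (a:ℂ)^2)/a with hC
  have h1 : HasSum (fun k : ℕ => C * ((a:ℂ)*w)^k) (C * (1 - (a:ℂ)*w)⁻¹) :=
    (hasSum_geometric_of_norm_lt_one haw).mul_left C
  have h3 : HasSum (fun k : ℕ => if k = 0 then ((a:ℂ) + (1-(a:ℂ)^2)/a) else 0)
      ((a:ℂ) + (1-(a:ℂ)^2)/a) := hasSum_ite_eq 0 _
  have h4 := h1.add h3
  have hfun : (fun k : ℕ => ((if k = 0 then a else -(1-a^2)*a^(k-1) : ℝ) : ℂ) * w ^ k)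
      = fun k : ℕ => C * ((a:ℂ)*w)^k + (if k = 0 then ((a:ℂ) + (1-(a:ℂ)^2)/a) else 0) := by
    funext k
    cases k with
    | zero => simp [hC]; field_simp; ring
    | succ m =>
      simp only [Nat.succ_ne_zero, if_false, add_zero, Nat.add_sub_cancel]
      push_cast
      rw [hC, mul_pow]
      field_simp
      ring
  rw [← hfun] at h4
  refine ⟨_, h4, ?_⟩
  have hM : C * (1 - (a:ℂ)*w)⁻¹ + ((a:ℂ) + (1-(a:ℂ)^2)/a) = ((a:ℂ) - w)/(1 - (a:ℂ)*w) := by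
    rw [hC]; field_simp; ring
  rw [hM, norm_div, div_lt_one (norm_pos_iff.mpr hne)]
  have hw2 : w.re^2 + w.im^2 < 1 := by
    have := Complex.sq_norm w
    have h' : ‖w‖ ^ 2 < 1 := by
      have := norm_nonneg w
      nlinarith [hw]
    rw [Complex.sq_norm, Complex.normSq_apply] at h'
    nlinarith [h']
  have hlt : Complex.normSq ((a:ℂ) - w) < Complex.normSq (1 - (a:ℂ)*w) := by
    simp only [Complex.normSq_apply, Complex.sub_re, Complex.sub_im, Complex.mul_re,
      Complex.mul_im, Complex.one_re, Complex.one_im, Complex.ofReal_re, Complex.ofReal_im]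
    have hp1 : (0:ℝ) < 1 - a^2 := by nlinarith
    have hp2 : (0:ℝ) < 1 - w.re^2 - w.im^2 := by nlinarith [hw2]
    nlinarith [mul_pos hp1 hp2]
  calc ‖(a:ℂ) - w‖ = Real.sqrt (Complex.normSq ((a:ℂ) - w)) := by
        rw [Complex.norm_def]
    _ < Real.sqrt (Complex.normSq (1 - (a:ℂ)*w)) :=
        Real.sqrt_lt_sqrt (Complex.normSq_nonneg _) hlt
    _ = ‖1 - (a:ℂ)*w‖ := by rw [Complex.norm_def]

set_option maxHeartbeats 1000000 in
/-- Theorem 6: for the unit hypercone `D⁰ = {z : Σ|z_j| < 1}`, the Bohr-type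
inequality fails for every `r ≥ 0.446663/n`, i.e. `B_n(D⁰) < 0.446663/n`. -/
theorem bohr_hypercone_upper (n : ℕ) (hn : 1 ≤ n) :
    ∀ r : ℝ, 0.446663 / n ≤ r →
      ∃ c : (Fin n → ℕ) → ℂ,
        (∀ z : Fin n → ℂ, (∑ j, ‖z j‖ < 1) →
          Summable (fun α : Fin n → ℕ => ‖c α * ∏ j, z j ^ α j‖)) ∧
        (∀ z : Fin n → ℂ, (∑ j, ‖z j‖ < 1) →
          ‖∑' α : Fin n → ℕ, c α * ∏ j, z j ^ α j‖ < 1) ∧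
        1 ≤ ∑' α : Fin n → ℕ, ENNReal.ofReal
          (‖c α‖ * r ^ (∑ j, α j) *
            ((∏ j, (α j : ℝ) ^ (α j)) / ((∑ j, α j : ℕ) : ℝ) ^ (∑ j, α j))) := by
  intro r hr
  set t : ℝ := 0.446663 with ht
  set a : ℝ := 0.999999 with ha
  have ha0 : (0:ℝ) < a := by norm_num [ha]
  have ha1 : a < 1 := by norm_num [ha]
  have h1a2 : (0:ℝ) ≤ 1 - a^2 := by nlinarith
  set b : ℕ → ℝ := fun k => if k = 0 then a else -(1-a^2)*a^(k-1) with hb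
  have habs : ∀ k, |b k| = if k = 0 then a else (1-a^2)*a^(k-1) := by
    intro k
    cases k with
    | zero => simp [hb, abs_of_pos ha0]
    | succ m =>
      simp only [hb, Nat.succ_ne_zero, if_false]
      rw [abs_of_nonpos (by nlinarith [mul_nonneg h1a2 (pow_nonneg ha0.le (m+1-1))] :
        -(1-a^2)*a^(m+1-1) ≤ 0)]
      ring
  have hble : ∀ k, |b k| ≤ 1 := by
    intro k
    rw [habs]
    cases k with
    | zero => simpa using ha1.le
    | succ m =>
      simp only [Nat.succ_ne_zero, if_false]
      nlinarith [(pow_le_one₀ ha0.le ha1.le : a ^ (m+1-1) ≤ 1),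
        pow_nonneg ha0.le (m+1-1), sq_nonneg a]
  set c : (Fin n → ℕ) → ℂ :=
    fun α => ((b (∑ j, α j) * (Nat.multinomial Finset.univ α : ℝ) : ℝ) : ℂ) with hc
  have hnormc : ∀ α : Fin n → ℕ,
      ‖c α‖ = |b (∑ j, α j)| * (Nat.multinomial Finset.univ α : ℝ) := by
    intro α
    simp only [hc]
    simp only [Complex.norm_real, Real.norm_eq_abs, abs_mul, Nat.abs_cast]
  -- norm of general term
  have hFnorm : ∀ (z : Fin n → ℂ) (α : Fin n → ℕ),
      ‖c α * ∏ j, z j ^ α j‖ =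
        |b (∑ j, α j)| * (Nat.multinomial Finset.univ α : ℝ) * ∏ j, ‖z j‖ ^ α j := by
    intro z α
    rw [norm_mul, hnormc]
    congr 1
    rw [norm_prod]
    exact Finset.prod_congr rfl (fun j _ => norm_pow _ _)
  -- fiber sums (real, for norms)
  have hfibR : ∀ (ρ : Fin n → ℝ) (k : ℕ),
      ∑ α ∈ Finset.piAntidiag Finset.univ k,
        (Nat.multinomial Finset.univ α : ℝ) * ∏ j, ρ j ^ α j = (∑ j, ρ j) ^ k := by
    intro ρ k
    exact (Finset.sum_pow_eq_sum_piAntidiag Finset.univ ρ k).symm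
  -- fiber sums (complex, with coefficients)
  have hfibC : ∀ (z : Fin n → ℂ) (k : ℕ),
      ∑ α ∈ Finset.piAntidiag Finset.univ k, c α * ∏ j, z j ^ α j
        = ((b k : ℝ) : ℂ) * (∑ j, z j) ^ k := by
    intro z k
    rw [Finset.sum_pow_eq_sum_piAntidiag Finset.univ z k, Finset.mul_sum]
    refine Finset.sum_congr rfl (fun α hα => ?_)
    have hk : (∑ j, α j) = k := by
      have := (Finset.mem_piAntidiag.mp hα).1
      simpa using this
    simp only [hc]
    rw [hk]
    push_cast
    ring
  have hσsum : ∀ (z : Fin n → ℂ), (∑ j, ‖z j‖ < 1) →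
      Summable (fun α : Fin n → ℕ => ‖c α * ∏ j, z j ^ α j‖) := by
    intro z hz
    set s : ℝ := ∑ j, ‖z j‖ with hs
    have hs0 : 0 ≤ s := Finset.sum_nonneg (fun j _ => norm_nonneg _)
    set F : (Fin n → ℕ) → ℝ := fun α => ‖c α * ∏ j, z j ^ α j‖ with hF
    have hF0 : ∀ α, 0 ≤ F α := fun α => norm_nonneg _
    set σ : (Fin n → ℕ) → ℕ := fun α => ∑ j, α j with hσ
    rw [← (Equiv.sigmaFiberEquiv σ).summable_iff]
    have hfib : ∀ k : ℕ, HasSum (fun p : {α : Fin n → ℕ // σ α = k} => F p.1)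
        (∑ α ∈ Finset.piAntidiag Finset.univ k, F α) := fun k => fiberHasSum F k
    have hre : (F ∘ ⇑(Equiv.sigmaFiberEquiv σ))
        = fun p : Σ k : ℕ, {α : Fin n → ℕ // σ α = k} => F p.2.1 := rfl
    rw [hre, summable_sigma_of_nonneg (fun p => hF0 _)]
    refine ⟨fun k => (hfib k).summable, ?_⟩
    have htsum : (fun k : ℕ => ∑' (y : {α : Fin n → ℕ // σ α = k}), F y.1)
        = fun k => ∑ α ∈ Finset.piAntidiag Finset.univ k, F α := by
      funext k; exact (hfib k).tsum_eq
    show Summable fun k : ℕ => ∑' (y : {α : Fin n → ℕ // σ α = k}), F y.1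
    rw [htsum]
    refine Summable.of_nonneg_of_le
      (fun k => Finset.sum_nonneg (fun α _ => hF0 α))
      (fun k => ?_) (summable_geometric_of_lt_one hs0 hz)
    calc ∑ α ∈ Finset.piAntidiag Finset.univ k, F α
        ≤ ∑ α ∈ Finset.piAntidiag Finset.univ k,
            (Nat.multinomial Finset.univ α : ℝ) * ∏ j, ‖z j‖ ^ α j := by
          refine Finset.sum_le_sum (fun α _ => ?_)
          simp only [hF]
          rw [hFnorm]
          have h1 : (0:ℝ) ≤ (Nat.multinomial Finset.univ α : ℝ) * ∏ j, ‖z j‖ ^ α j := by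
            positivity
          nlinarith [hble (∑ j, α j), abs_nonneg (b (∑ j, α j)), h1]
      _ = s ^ k := hfibR (fun j => ‖z j‖) k
  refine ⟨c, hσsum, ?_, ?_⟩
  · -- bounded by 1
    intro z hz
    have hwlt : ‖∑ j, z j‖ < 1 := lt_of_le_of_lt (norm_sum_le _ _) hz
    obtain ⟨M, hM, hMlt⟩ := mobius_hasSum a ha0 ha1 (∑ j, z j) hwlt
    have hGsum : Summable (fun α : Fin n → ℕ => c α * ∏ j, z j ^ α j) :=
      Summable.of_norm (hσsum z hz)
    set σ : (Fin n → ℕ) → ℕ := fun α => ∑ j, α j with hσ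
    have h0 := ((Equiv.sigmaFiberEquiv σ).hasSum_iff
        (f := fun α : Fin n → ℕ => c α * ∏ j, z j ^ α j)).mpr hGsum.hasSum
    have h1 : HasSum (fun p : Σ k : ℕ, {α : Fin n → ℕ // σ α = k} =>
          c p.2.1 * ∏ j, z j ^ p.2.1 j)
        (∑' α : Fin n → ℕ, c α * ∏ j, z j ^ α j) := h0
    have h2 : HasSum (fun k : ℕ => ((b k : ℝ) : ℂ) * (∑ j, z j) ^ k)
        (∑' α : Fin n → ℕ, c α * ∏ j, z j ^ α j) := by
      refine h1.sigma (fun k => ?_)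
      have h5 := fiberHasSum (fun α : Fin n → ℕ => c α * ∏ j, z j ^ α j) k
      beta_reduce at h5
      rw [hfibC z k] at h5
      exact h5
    have heq : (∑' α : Fin n → ℕ, c α * ∏ j, z j ^ α j) = M := h2.unique hM
    rw [heq]
    exact hMlt
  · -- Bohr sum lower bound
    have hn0 : (0:ℝ) < n := by exact_mod_cast hn
    have ht0 : (0:ℝ) < t := by norm_num [ht]
    have hrn : t ≤ r * n := by rwa [div_le_iff₀ hn0] at hr
    have hr0 : 0 ≤ r := le_trans (by positivity) hr
    set term : (Fin n → ℕ) → ℝ := fun α =>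
      ‖c α‖ * r ^ (∑ j, α j) *
        ((∏ j, (α j : ℝ) ^ (α j)) / ((∑ j, α j : ℕ) : ℝ) ^ (∑ j, α j)) with hterm
    have hterm0 : ∀ α, 0 ≤ term α := by
      intro α
      have h1 : (0:ℝ) ≤ ∏ j, (α j : ℝ) ^ (α j) :=
        Finset.prod_nonneg (fun j _ => pow_nonneg (Nat.cast_nonneg _) _)
      have h2 : (0:ℝ) ≤ ((∑ j, α j : ℕ) : ℝ) ^ (∑ j, α j) := by positivity
      simp only [hterm]
      have := norm_nonneg (c α)
      positivity
    -- key fiber lower bound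
    have key : ∀ k : ℕ, |b k| * t ^ k / (k:ℝ) ^ k ≤
        ∑ α ∈ Finset.piAntidiag Finset.univ k, term α := by
      intro k
      have hk0 : (0:ℝ) < (k:ℝ)^k := by
        cases k with
        | zero => norm_num
        | succ m => positivity
      have hmult : ∑ α ∈ Finset.piAntidiag (Finset.univ : Finset (Fin n)) k,
          (Nat.multinomial Finset.univ α : ℝ) = (n:ℝ) ^ k := by
        have h := Finset.sum_pow_eq_sum_piAntidiag (Finset.univ : Finset (Fin n))
          (fun _ : Fin n => (1:ℝ)) k
        simpa using h.symm
      calc |b k| * t ^ k / (k:ℝ) ^ k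
          ≤ |b k| * (r*n) ^ k / (k:ℝ) ^ k := by
            gcongr
        _ = ∑ α ∈ Finset.piAntidiag Finset.univ k,
              |b k| * r ^ k * (Nat.multinomial Finset.univ α : ℝ) / (k:ℝ)^k := by
            rw [← Finset.sum_div, ← Finset.mul_sum, hmult, mul_pow]
            ring
        _ ≤ ∑ α ∈ Finset.piAntidiag Finset.univ k, term α := by
            refine Finset.sum_le_sum (fun α hα => ?_)
            have hk : (∑ j, α j) = k := by
              have := (Finset.mem_piAntidiag.mp hα).1
              simpa using this
            have hprod1 : (1:ℝ) ≤ ∏ j, (α j : ℝ) ^ (α j) := by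
              calc (1:ℝ) = ∏ _j : Fin n, 1 := by simp
                _ ≤ ∏ j, (α j : ℝ) ^ (α j) := by
                  refine Finset.prod_le_prod (fun j _ => by norm_num) (fun j _ => ?_)
                  cases hj : α j with
                  | zero => simp
                  | succ m =>
                    refine one_le_pow₀ ?_
                    exact_mod_cast Nat.one_le_iff_ne_zero.mpr (Nat.succ_ne_zero m)
            simp only [hterm]
            rw [hnormc, hk]
            have h2 : (0:ℝ) ≤ |b k| * r ^ k * (Nat.multinomial Finset.univ α : ℝ) := by
              positivity
            calc |b k| * r ^ k * (Nat.multinomial Finset.univ α : ℝ) / (k:ℝ)^k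
                = (|b k| * r ^ k * (Nat.multinomial Finset.univ α : ℝ)) * (1 / (k:ℝ)^k) := by
                  ring
              _ ≤ (|b k| * r ^ k * (Nat.multinomial Finset.univ α : ℝ)) *
                    ((∏ j, (α j : ℝ) ^ (α j)) / (k:ℝ)^k) := by
                  refine mul_le_mul_of_nonneg_left ?_ h2
                  gcongr
              _ = |b k| * (Nat.multinomial Finset.univ α : ℝ) * r ^ k *
                    ((∏ j, (α j : ℝ) ^ (α j)) / (k:ℝ)^k) := by ring
    -- numeric bound
    have hnum : (1:ℝ) ≤ ∑ k ∈ Finset.range 7, |b k| * t ^ k / (k:ℝ) ^ k := by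
      have e : ∀ k ∈ Finset.range 7, |b k| * t ^ k / (k:ℝ) ^ k
          = (if k = 0 then a else (1-a^2)*a^(k-1)) * t ^ k / (k:ℝ) ^ k := by
        intro k _; rw [habs]
      rw [Finset.sum_congr rfl e]
      simp only [Finset.sum_range_succ, Finset.range_one, Finset.sum_singleton]
      norm_num [ht, ha]
    -- assemble in ENNReal
    set S : Finset (Fin n → ℕ) :=
      (Finset.range 7).biUnion (fun k => Finset.piAntidiag Finset.univ k) with hS
    have hdisj : ∀ k₁ ∈ Finset.range 7, ∀ k₂ ∈ Finset.range 7, k₁ ≠ k₂ →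
        Disjoint (Finset.piAntidiag (Finset.univ : Finset (Fin n)) k₁)
          (Finset.piAntidiag Finset.univ k₂) := by
      intro k₁ _ k₂ _ hne
      rw [Finset.disjoint_left]
      intro α h1 h2
      exact hne ((Finset.mem_piAntidiag.mp h1).1.symm.trans (Finset.mem_piAntidiag.mp h2).1)
    calc (1:ENNReal) = ENNReal.ofReal 1 := by simp
      _ ≤ ENNReal.ofReal (∑ k ∈ Finset.range 7, |b k| * t ^ k / (k:ℝ) ^ k) :=
          ENNReal.ofReal_le_ofReal hnum
      _ ≤ ENNReal.ofReal (∑ k ∈ Finset.range 7,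
            ∑ α ∈ Finset.piAntidiag Finset.univ k, term α) :=
          ENNReal.ofReal_le_ofReal (Finset.sum_le_sum (fun k _ => key k))
      _ = ∑ k ∈ Finset.range 7, ∑ α ∈ Finset.piAntidiag Finset.univ k,
            ENNReal.ofReal (term α) := by
          rw [ENNReal.ofReal_sum_of_nonneg (fun k _ =>
            Finset.sum_nonneg (fun α _ => hterm0 α))]
          exact Finset.sum_congr rfl (fun k _ =>
            ENNReal.ofReal_sum_of_nonneg (fun α _ => hterm0 α))
      _ = ∑ α ∈ S, ENNReal.ofReal (term α) := (Finset.sum_biUnion hdisj).symm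
      _ ≤ ∑' α : Fin n → ℕ, ENNReal.ofReal (term α) := ENNReal.sum_le_tsum S
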